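/- For any three-qubit mixed state ρ, the convex-roof extended GME measure E_m(ρ) = inf over pure-state decompositions of Σ p_i E_m(|ψ_i⟩) satisfies E_m(ρ) ≥ √2(|⟨001|ρ|100⟩| + |⟨001|ρ|010⟩| + |⟨100|ρ|010⟩|) − (√2/2)(⟨010|ρ|010⟩ + ⟨100|ρ|100⟩ + ⟨001|ρ|001⟩) − √2(√(⟨101|ρ|101⟩⟨000|ρ|000⟩) + √(⟨110|ρ|110⟩⟨000|ρ|000⟩) + √(⟨011|ρ|011⟩⟨000|ρ|000⟩)). -/

import Mathlib

open Finset

abbrev Idx3 : Type := Fin 2 × Fin 2 × Fin 2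

/-- Reduced density matrix of the first qubit of a pure three-qubit state. -/
noncomputable def rho1 (c : Idx3 → ℂ) : Matrix (Fin 2) (Fin 2) ℂ :=
  fun i i' => ∑ j : Fin 2, ∑ k : Fin 2, c (i, j, k) * (starRingEnd ℂ) (c (i', j, k))

/-- Reduced density matrix of the second qubit. -/
noncomputable def rho2 (c : Idx3 → ℂ) : Matrix (Fin 2) (Fin 2) ℂ :=
  fun j j' => ∑ i : Fin 2, ∑ k : Fin 2, c (i, j, k) * (starRingEnd ℂ) (c (i, j', k))

/-- Reduced density matrix of the third qubit. -/
noncomputable def rho3 (c : Idx3 → ℂ) : Matrix (Fin 2) (Fin 2) ℂ :=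
  fun k k' => ∑ i : Fin 2, ∑ j : Fin 2, c (i, j, k) * (starRingEnd ℂ) (c (i, j, k'))

/-- `√(S_L(ρ))` for a one-qubit reduced matrix `ρ`. -/
noncomputable def sqrtSL (ρ : Matrix (Fin 2) (Fin 2) ℂ) : ℝ :=
  Real.sqrt (2 * (1 - (Matrix.trace (ρ * ρ)).re))

/-- GME measure of a pure three-qubit state: min over the three bipartitions. -/
noncomputable def EmPure (c : Idx3 → ℂ) : ℝ :=
  min (min (sqrtSL (rho1 c)) (sqrtSL (rho2 c))) (sqrtSL (rho3 c))

/-- The set of ensemble averages `Σ_i p_i E_m(|ψ_i⟩)` over all finite pure-state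
decompositions `ρ = Σ_i p_i |ψ_i⟩⟨ψ_i|` of `ρ`. -/
def roofSet (ρ : Matrix Idx3 Idx3 ℂ) : Set ℝ :=
  {x | ∃ (m : ℕ) (p : Fin m → ℝ) (c : Fin m → Idx3 → ℂ),
    (∀ i, 0 ≤ p i) ∧ (∑ i, p i = 1) ∧
    (∀ i, ∑ η : Idx3, Complex.normSq (c i η) = 1) ∧
    (∀ η₁ η₂ : Idx3, ρ η₁ η₂ = ∑ i, (p i : ℂ) * c i η₁ * (starRingEnd ℂ) (c i η₂)) ∧
    x = ∑ i, p i * EmPure (c i)}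

set_option maxHeartbeats 2000000

lemma sqrt_helper (T r : ℝ) (M1 M2 : ℂ) (hr : 0 ≤ r)
    (key : 2 * (1 - T) = 4 * (Complex.normSq M1 + Complex.normSq M2) + r) :
    Real.sqrt 2 * (‖M1‖ + ‖M2‖) ≤ Real.sqrt (2 * (1 - T)) := by
  have h1 : (0:ℝ) ≤ Real.sqrt 2 * (‖M1‖ + ‖M2‖) := by positivity
  rw [show (2:ℝ) * (1 - T) = 4 * (Complex.normSq M1 + Complex.normSq M2) + r from key]
  rw [← Real.sqrt_sq h1]
  apply Real.sqrt_le_sqrt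
  have e1 := Complex.sq_norm M1
  have e2 := Complex.sq_norm M2
  nlinarith [sq_nonneg (‖M1‖ - ‖M2‖), Real.sq_sqrt (by norm_num : (0:ℝ) ≤ 2)]

lemma tri (a b d e : ℂ) : ‖a‖ * ‖b‖ - ‖d‖ * ‖e‖
    ≤ ‖a * b - d * e‖ := by
  have := norm_add_le (a*b - d*e) (d*e)
  simp only [sub_add_cancel, norm_mul] at this ⊢
  linarith

lemma lag1 (c : Idx3 → ℂ) (h : ∑ η : Idx3, Complex.normSq (c η) = 1) :
    2 * (1 - (Matrix.trace (rho1 c * rho1 c)).re) =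
    4 * (Complex.normSq (c (0,0,0) * c (1,0,1) - c (1,0,0) * c (0,0,1))
       + Complex.normSq (c (0,0,0) * c (1,1,0) - c (1,0,0) * c (0,1,0)))
    + 4 * (Complex.normSq (c (0,0,0) * c (1,1,1) - c (1,0,0) * c (0,1,1))
       + Complex.normSq (c (0,0,1) * c (1,1,0) - c (1,0,1) * c (0,1,0))
       + Complex.normSq (c (0,0,1) * c (1,1,1) - c (1,0,1) * c (0,1,1))
       + Complex.normSq (c (0,1,0) * c (1,1,1) - c (1,1,0) * c (0,1,1))) := by
  have h2 : (∑ η : Idx3, Complex.normSq (c η))^2 = 1 := by rw [h]; ring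
  simp only [Fintype.sum_prod_type, Fin.sum_univ_two, Complex.normSq_apply] at h2 ⊢
  simp only [Matrix.trace, Matrix.mul_apply, rho1, Fin.sum_univ_two, Matrix.diag_apply,
    Complex.add_re, Complex.mul_re, Complex.mul_im, Complex.sub_re, Complex.sub_im,
    Complex.conj_re, Complex.conj_im, Complex.add_im]
  linear_combination (-2 : ℝ) * h2

lemma lag2 (c : Idx3 → ℂ) (h : ∑ η : Idx3, Complex.normSq (c η) = 1) :
    2 * (1 - (Matrix.trace (rho2 c * rho2 c)).re) =
    4 * (Complex.normSq (c (0,0,0) * c (0,1,1) - c (0,1,0) * c (0,0,1))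
       + Complex.normSq (c (0,0,0) * c (1,1,0) - c (0,1,0) * c (1,0,0)))
    + 4 * (Complex.normSq (c (0,0,0) * c (1,1,1) - c (0,1,0) * c (1,0,1))
       + Complex.normSq (c (0,0,1) * c (1,1,0) - c (0,1,1) * c (1,0,0))
       + Complex.normSq (c (0,0,1) * c (1,1,1) - c (0,1,1) * c (1,0,1))
       + Complex.normSq (c (1,0,0) * c (1,1,1) - c (1,1,0) * c (1,0,1))) := by
  have h2 : (∑ η : Idx3, Complex.normSq (c η))^2 = 1 := by rw [h]; ring
  simp only [Fintype.sum_prod_type, Fin.sum_univ_two, Complex.normSq_apply] at h2 ⊢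
  simp only [Matrix.trace, Matrix.mul_apply, rho2, Fin.sum_univ_two, Matrix.diag_apply,
    Complex.add_re, Complex.mul_re, Complex.mul_im, Complex.sub_re, Complex.sub_im,
    Complex.conj_re, Complex.conj_im, Complex.add_im]
  linear_combination (-2 : ℝ) * h2

lemma lag3 (c : Idx3 → ℂ) (h : ∑ η : Idx3, Complex.normSq (c η) = 1) :
    2 * (1 - (Matrix.trace (rho3 c * rho3 c)).re) =
    4 * (Complex.normSq (c (0,0,0) * c (0,1,1) - c (0,0,1) * c (0,1,0))
       + Complex.normSq (c (0,0,0) * c (1,0,1) - c (0,0,1) * c (1,0,0)))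
    + 4 * (Complex.normSq (c (0,0,0) * c (1,1,1) - c (0,0,1) * c (1,1,0))
       + Complex.normSq (c (0,1,0) * c (1,0,1) - c (0,1,1) * c (1,0,0))
       + Complex.normSq (c (0,1,0) * c (1,1,1) - c (0,1,1) * c (1,1,0))
       + Complex.normSq (c (1,0,0) * c (1,1,1) - c (1,0,1) * c (1,1,0))) := by
  have h2 : (∑ η : Idx3, Complex.normSq (c η))^2 = 1 := by rw [h]; ring
  simp only [Fintype.sum_prod_type, Fin.sum_univ_two, Complex.normSq_apply] at h2 ⊢
  simp only [Matrix.trace, Matrix.mul_apply, rho3, Fin.sum_univ_two, Matrix.diag_apply,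
    Complex.add_re, Complex.mul_re, Complex.mul_im, Complex.sub_re, Complex.sub_im,
    Complex.conj_re, Complex.conj_im, Complex.add_im]
  linear_combination (-2 : ℝ) * h2

lemma pure_bound (c : Idx3 → ℂ) (h : ∑ η : Idx3, Complex.normSq (c η) = 1) :
    Real.sqrt 2 * (‖c (0,0,1)‖ * ‖c (1,0,0)‖
      + ‖c (0,0,1)‖ * ‖c (0,1,0)‖
      + ‖c (1,0,0)‖ * ‖c (0,1,0)‖)
    - (Real.sqrt 2 / 2) * ((‖c (0,1,0)‖)^2 + (‖c (1,0,0)‖)^2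
      + (‖c (0,0,1)‖)^2)
    - Real.sqrt 2 * (‖c (1,0,1)‖ * ‖c (0,0,0)‖
      + ‖c (1,1,0)‖ * ‖c (0,0,0)‖
      + ‖c (0,1,1)‖ * ‖c (0,0,0)‖) ≤ EmPure c := by
  set A := ‖c (0,0,1)‖ with hA
  set B := ‖c (1,0,0)‖ with hB
  set C := ‖c (0,1,0)‖ with hC
  set D := ‖c (0,0,0)‖ with hD
  set P := ‖c (1,0,1)‖ with hP
  set Q := ‖c (1,1,0)‖ with hQ
  set R := ‖c (0,1,1)‖ with hR
  have hs : (0:ℝ) ≤ Real.sqrt 2 := Real.sqrt_nonneg 2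
  have hA0 : 0 ≤ A := norm_nonneg _
  have hB0 : 0 ≤ B := norm_nonneg _
  have hC0 : 0 ≤ C := norm_nonneg _
  have hD0 : 0 ≤ D := norm_nonneg _
  have hP0 : 0 ≤ P := norm_nonneg _
  have hQ0 : 0 ≤ Q := norm_nonneg _
  have hR0 : 0 ≤ R := norm_nonneg _
  have b1 : Real.sqrt 2 * ((A*B - P*D) + (B*C - Q*D)) ≤ sqrtSL (rho1 c) := by
    have hkey := lag1 c h
    have hb := sqrt_helper _ _ _ _ (mul_nonneg (by norm_num) (add_nonneg (add_nonneg (add_nonneg (Complex.normSq_nonneg _) (Complex.normSq_nonneg _)) (Complex.normSq_nonneg _)) (Complex.normSq_nonneg _))) hkey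
    refine le_trans ?_ hb
    have t1 := tri (c (1,0,0)) (c (0,0,1)) (c (0,0,0)) (c (1,0,1))
    have t2 := tri (c (1,0,0)) (c (0,1,0)) (c (0,0,0)) (c (1,1,0))
    rw [show c (1,0,0) * c (0,0,1) - c (0,0,0) * c (1,0,1)
        = -(c (0,0,0) * c (1,0,1) - c (1,0,0) * c (0,0,1)) by ring, norm_neg] at t1
    rw [show c (1,0,0) * c (0,1,0) - c (0,0,0) * c (1,1,0)
        = -(c (0,0,0) * c (1,1,0) - c (1,0,0) * c (0,1,0)) by ring, norm_neg] at t2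
    have : (A*B - P*D) + (B*C - Q*D) ≤ ‖c (0,0,0) * c (1,0,1) - c (1,0,0) * c (0,0,1)‖
        + ‖c (0,0,0) * c (1,1,0) - c (1,0,0) * c (0,1,0)‖ := by
      rw [hA, hB, hC, hD, hP, hQ]; linarith
    nlinarith [mul_le_mul_of_nonneg_left this hs]
  have b2 : Real.sqrt 2 * ((A*C - R*D) + (B*C - Q*D)) ≤ sqrtSL (rho2 c) := by
    have hkey := lag2 c h
    have hb := sqrt_helper _ _ _ _ (mul_nonneg (by norm_num) (add_nonneg (add_nonneg (add_nonneg (Complex.normSq_nonneg _) (Complex.normSq_nonneg _)) (Complex.normSq_nonneg _)) (Complex.normSq_nonneg _))) hkey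
    refine le_trans ?_ hb
    have t1 := tri (c (0,1,0)) (c (0,0,1)) (c (0,0,0)) (c (0,1,1))
    have t2 := tri (c (0,1,0)) (c (1,0,0)) (c (0,0,0)) (c (1,1,0))
    rw [show c (0,1,0) * c (0,0,1) - c (0,0,0) * c (0,1,1)
        = -(c (0,0,0) * c (0,1,1) - c (0,1,0) * c (0,0,1)) by ring, norm_neg] at t1
    rw [show c (0,1,0) * c (1,0,0) - c (0,0,0) * c (1,1,0)
        = -(c (0,0,0) * c (1,1,0) - c (0,1,0) * c (1,0,0)) by ring, norm_neg] at t2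
    have : (A*C - R*D) + (B*C - Q*D) ≤ ‖c (0,0,0) * c (0,1,1) - c (0,1,0) * c (0,0,1)‖
        + ‖c (0,0,0) * c (1,1,0) - c (0,1,0) * c (1,0,0)‖ := by
      rw [hA, hB, hC, hD, hR, hQ]; linarith
    nlinarith [mul_le_mul_of_nonneg_left this hs]
  have b3 : Real.sqrt 2 * ((A*C - R*D) + (A*B - P*D)) ≤ sqrtSL (rho3 c) := by
    have hkey := lag3 c h
    have hb := sqrt_helper _ _ _ _ (mul_nonneg (by norm_num) (add_nonneg (add_nonneg (add_nonneg (Complex.normSq_nonneg _) (Complex.normSq_nonneg _)) (Complex.normSq_nonneg _)) (Complex.normSq_nonneg _))) hkey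
    refine le_trans ?_ hb
    have t1 := tri (c (0,0,1)) (c (0,1,0)) (c (0,0,0)) (c (0,1,1))
    have t2 := tri (c (0,0,1)) (c (1,0,0)) (c (0,0,0)) (c (1,0,1))
    rw [show c (0,0,1) * c (0,1,0) - c (0,0,0) * c (0,1,1)
        = -(c (0,0,0) * c (0,1,1) - c (0,0,1) * c (0,1,0)) by ring, norm_neg] at t1
    rw [show c (0,0,1) * c (1,0,0) - c (0,0,0) * c (1,0,1)
        = -(c (0,0,0) * c (1,0,1) - c (0,0,1) * c (1,0,0)) by ring, norm_neg] at t2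
    have : (A*C - R*D) + (A*B - P*D) ≤ ‖c (0,0,0) * c (0,1,1) - c (0,0,1) * c (0,1,0)‖
        + ‖c (0,0,0) * c (1,0,1) - c (0,0,1) * c (1,0,0)‖ := by
      rw [hA, hB, hC, hD, hR, hP]; linarith
    nlinarith [mul_le_mul_of_nonneg_left this hs]
  refine le_min (le_min ?_ ?_) ?_
  · refine le_trans ?_ b1
    have key : A*C ≤ (C^2+B^2+A^2)/2 + R*D := by
      nlinarith [sq_nonneg (A-C), mul_nonneg hR0 hD0, sq_nonneg B]
    nlinarith [mul_le_mul_of_nonneg_left key hs]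
  · refine le_trans ?_ b2
    have key : A*B ≤ (C^2+B^2+A^2)/2 + P*D := by
      nlinarith [sq_nonneg (A-B), mul_nonneg hP0 hD0, sq_nonneg C]
    nlinarith [mul_le_mul_of_nonneg_left key hs]
  · refine le_trans ?_ b3
    have key : B*C ≤ (C^2+B^2+A^2)/2 + Q*D := by
      nlinarith [sq_nonneg (B-C), mul_nonneg hQ0 hD0, sq_nonneg A]
    nlinarith [mul_le_mul_of_nonneg_left key hs]
/-- For any three-qubit mixed state `ρ`, the convex-roof GME measure
`E_m(ρ) = inf Σ_i p_i E_m(|ψ_i⟩)` is bounded below by the nonlinear witness built from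
density matrix elements of `ρ`. -/
theorem Em_mixed_lower_bound (ρ : Matrix Idx3 Idx3 ℂ) (hne : (roofSet ρ).Nonempty) :
    sInf (roofSet ρ) ≥
      Real.sqrt 2 * (‖ρ (0,0,1) (1,0,0)‖ + ‖ρ (0,0,1) (0,1,0)‖ +
          ‖ρ (1,0,0) (0,1,0)‖)
      - (Real.sqrt 2 / 2) * ((ρ (0,1,0) (0,1,0)).re + (ρ (1,0,0) (1,0,0)).re +
          (ρ (0,0,1) (0,0,1)).re)
      - Real.sqrt 2 * (Real.sqrt ((ρ (1,0,1) (1,0,1)).re * (ρ (0,0,0) (0,0,0)).re) +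
          Real.sqrt ((ρ (1,1,0) (1,1,0)).re * (ρ (0,0,0) (0,0,0)).re) +
          Real.sqrt ((ρ (0,1,1) (0,1,1)).re * (ρ (0,0,0) (0,0,0)).re)) := by
  refine le_csInf hne ?_
  rintro x ⟨m, p, c, hp, hsum, hnorm, hρ, rfl⟩
  have hs : (0:ℝ) ≤ Real.sqrt 2 := Real.sqrt_nonneg 2
  -- off-diagonal bound
  have habs : ∀ η₁ η₂ : Idx3, ‖ρ η₁ η₂‖
      ≤ ∑ i, p i * (‖c i η₁‖ * ‖c i η₂‖) := by
    intro η₁ η₂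
    rw [hρ]
    refine le_trans (norm_sum_le _ _) (le_of_eq (Finset.sum_congr rfl fun i _ => ?_))
    rw [norm_mul, norm_mul, Complex.norm_conj, Complex.norm_real, Real.norm_of_nonneg (hp i), mul_assoc]
  -- diagonal identity
  have hdiag : ∀ η : Idx3, (ρ η η).re = ∑ i, p i * (‖c i η‖)^2 := by
    intro η
    rw [hρ, Complex.re_sum]
    refine Finset.sum_congr rfl fun i _ => ?_
    rw [mul_assoc, Complex.mul_conj, ← Complex.ofReal_mul, Complex.ofReal_re, Complex.sq_norm]
  -- Cauchy-Schwarz bound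
  have hcs : ∀ a b : Idx3, ∑ i, p i * (‖c i a‖ * ‖c i b‖)
      ≤ Real.sqrt ((ρ a a).re * (ρ b b).re) := by
    intro a b
    rw [hdiag a, hdiag b]
    have hfg : ∑ i, p i * (‖c i a‖ * ‖c i b‖)
        = ∑ i, (Real.sqrt (p i) * ‖c i a‖) * (Real.sqrt (p i) * ‖c i b‖) := by
      refine Finset.sum_congr rfl fun i _ => ?_
      rw [show (Real.sqrt (p i) * ‖c i a‖) * (Real.sqrt (p i) * ‖c i b‖)
        = (Real.sqrt (p i) * Real.sqrt (p i)) * (‖c i a‖ * ‖c i b‖) by ring,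
        Real.mul_self_sqrt (hp i)]
    rw [hfg]
    have hnn : (0:ℝ) ≤ ∑ i, (Real.sqrt (p i) * ‖c i a‖) * (Real.sqrt (p i) * ‖c i b‖) :=
      Finset.sum_nonneg fun i _ => mul_nonneg (by positivity) (by positivity)
    rw [← Real.sqrt_sq hnn]
    apply Real.sqrt_le_sqrt
    have h2 := Finset.sum_mul_sq_le_sq_mul_sq Finset.univ
      (fun i => Real.sqrt (p i) * ‖c i a‖) (fun i => Real.sqrt (p i) * ‖c i b‖)
    refine le_trans h2 (le_of_eq ?_)
    congr 1 <;> refine Finset.sum_congr rfl fun i _ => ?_ <;>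
      rw [mul_pow, Real.sq_sqrt (hp i)]
  -- per-state pure bound, summed
  have hpb : ∀ i, Real.sqrt 2 * (‖c i (0,0,1)‖ * ‖c i (1,0,0)‖
      + ‖c i (0,0,1)‖ * ‖c i (0,1,0)‖
      + ‖c i (1,0,0)‖ * ‖c i (0,1,0)‖)
    - (Real.sqrt 2 / 2) * ((‖c i (0,1,0)‖)^2 + (‖c i (1,0,0)‖)^2
      + (‖c i (0,0,1)‖)^2)
    - Real.sqrt 2 * (‖c i (1,0,1)‖ * ‖c i (0,0,0)‖
      + ‖c i (1,1,0)‖ * ‖c i (0,0,0)‖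
      + ‖c i (0,1,1)‖ * ‖c i (0,0,0)‖) ≤ EmPure (c i) :=
    fun i => pure_bound (c i) (hnorm i)
  have hx1 : ∑ i, p i * (Real.sqrt 2 * (‖c i (0,0,1)‖ * ‖c i (1,0,0)‖
      + ‖c i (0,0,1)‖ * ‖c i (0,1,0)‖
      + ‖c i (1,0,0)‖ * ‖c i (0,1,0)‖)
    - (Real.sqrt 2 / 2) * ((‖c i (0,1,0)‖)^2 + (‖c i (1,0,0)‖)^2
      + (‖c i (0,0,1)‖)^2)
    - Real.sqrt 2 * (‖c i (1,0,1)‖ * ‖c i (0,0,0)‖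
      + ‖c i (1,1,0)‖ * ‖c i (0,0,0)‖
      + ‖c i (0,1,1)‖ * ‖c i (0,0,0)‖))
      ≤ ∑ i, p i * EmPure (c i) :=
    Finset.sum_le_sum fun i _ => mul_le_mul_of_nonneg_left (hpb i) (hp i)
  refine le_trans ?_ hx1
  have e : ∑ i, p i * (Real.sqrt 2 * (‖c i (0,0,1)‖ * ‖c i (1,0,0)‖
      + ‖c i (0,0,1)‖ * ‖c i (0,1,0)‖
      + ‖c i (1,0,0)‖ * ‖c i (0,1,0)‖)
    - (Real.sqrt 2 / 2) * ((‖c i (0,1,0)‖)^2 + (‖c i (1,0,0)‖)^2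
      + (‖c i (0,0,1)‖)^2)
    - Real.sqrt 2 * (‖c i (1,0,1)‖ * ‖c i (0,0,0)‖
      + ‖c i (1,1,0)‖ * ‖c i (0,0,0)‖
      + ‖c i (0,1,1)‖ * ‖c i (0,0,0)‖))
    = Real.sqrt 2 * ((∑ i, p i * (‖c i (0,0,1)‖ * ‖c i (1,0,0)‖))
        + (∑ i, p i * (‖c i (0,0,1)‖ * ‖c i (0,1,0)‖))
        + (∑ i, p i * (‖c i (1,0,0)‖ * ‖c i (0,1,0)‖)))
      - (Real.sqrt 2 / 2) * ((∑ i, p i * (‖c i (0,1,0)‖)^2)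
        + (∑ i, p i * (‖c i (1,0,0)‖)^2)
        + (∑ i, p i * (‖c i (0,0,1)‖)^2))
      - Real.sqrt 2 * ((∑ i, p i * (‖c i (1,0,1)‖ * ‖c i (0,0,0)‖))
        + (∑ i, p i * (‖c i (1,1,0)‖ * ‖c i (0,0,0)‖))
        + (∑ i, p i * (‖c i (0,1,1)‖ * ‖c i (0,0,0)‖))) := by
    simp only [Finset.mul_sum, ← Finset.sum_add_distrib, ← Finset.sum_sub_distrib]
    exact Finset.sum_congr rfl fun i _ => by ring
  rw [e]
  have m1 := mul_le_mul_of_nonneg_left (add_le_add (add_le_add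
    (habs (0,0,1) (1,0,0)) (habs (0,0,1) (0,1,0))) (habs (1,0,0) (0,1,0))) hs
  have m2 := mul_le_mul_of_nonneg_left (add_le_add (add_le_add
    (hcs (1,0,1) (0,0,0)) (hcs (1,1,0) (0,0,0))) (hcs (0,1,1) (0,0,0))) hs
  have d1 := hdiag (0,1,0)
  have d2 := hdiag (1,0,0)
  have d3 := hdiag (0,0,1)
  rw [d1, d2, d3]
  linarith [m1, m2]
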